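/- If t ≥ 3 is odd and d ≥ (t+1)/2, then the d-distance chromatic number of G(ℤ,{2,t}) is at most td + (−t² + 2t + 7)/4. -/

import Mathlib

def distG (t : ℤ) : SimpleGraph ℤ :=
  SimpleGraph.fromRel (fun i j => |i - j| = 2 ∨ |i - j| = t)

lemma distG_adj_step {t x y : ℤ} (h : (distG t).Adj x y) :
    y - x = 2 ∨ y - x = -2 ∨ y - x = t ∨ y - x = -t := by
  simp only [distG, SimpleGraph.fromRel_adj] at h
  obtain ⟨-, h⟩ := h
  have habs : |x - y| = 2 ∨ |x - y| = t := by
    rcases h with h | h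
    · exact h
    · rwa [abs_sub_comm] at h
  rcases habs with h | h
  · rcases (abs_eq (by norm_num : (0:ℤ) ≤ 2)).mp h with h | h
    · exact Or.inr (Or.inl (by linarith))
    · exact Or.inl (by linarith)
  · have ht0 : 0 ≤ t := h ▸ abs_nonneg _
    rcases (abs_eq ht0).mp h with h | h
    · exact Or.inr (Or.inr (Or.inr (by linarith)))
    · exact Or.inr (Or.inr (Or.inl (by linarith)))

lemma distG_adj_of (t x s : ℤ) (hs : s = 2 ∨ s = t) (hs0 : 0 < s) :
    (distG t).Adj x (x + s) := by
  simp only [distG, SimpleGraph.fromRel_adj]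
  refine ⟨by omega, Or.inl ?_⟩
  have h1 : x - (x + s) = -s := by ring
  rw [h1, abs_neg, abs_of_pos hs0]
  tauto

lemma distG_reach_nat (t x s : ℤ) (hs : s = 2 ∨ s = t) (hs0 : 0 < s) (n : ℕ) :
    (distG t).Reachable x (x + s * n) := by
  induction n with
  | zero =>
      have h1 : x + s * ((0:ℕ):ℤ) = x := by simp
      rw [h1]
  | succ n ih =>
      have key : (distG t).Reachable (x + s * n) (x + s * ((n+1:ℕ):ℤ)) := by
        have h := (distG_adj_of t (x + s * n) s hs hs0).reachable
        have he : x + s * n + s = x + s * ((n+1:ℕ):ℤ) := by push_cast; ring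
        rwa [he] at h
      exact ih.trans key

lemma distG_reach_int (t x s : ℤ) (hs : s = 2 ∨ s = t) (hs0 : 0 < s) (a : ℤ) :
    (distG t).Reachable x (x + s * a) := by
  rcases le_or_gt 0 a with ha | ha
  · have h := distG_reach_nat t x s hs hs0 a.toNat
    rwa [Int.toNat_of_nonneg ha] at h
  · have h := distG_reach_nat t (x + s * a) s hs hs0 (-a).toNat
    rw [Int.toNat_of_nonneg (by omega)] at h
    have h2 : x + s * a + s * -a = x := by ring
    rw [h2] at h
    exact h.symm

lemma distG_reach {t : ℤ} (ht : Odd t) (h3 : 3 ≤ t) (u v : ℤ) :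
    (distG t).Reachable u v := by
  obtain ⟨r, hr⟩ := ht
  obtain ⟨A, B, hAB⟩ : ∃ A B : ℤ, v = u + 2 * A + t * B := by
    rcases Int.even_or_odd (v - u) with ⟨a, ha⟩ | ⟨a, ha⟩
    · exact ⟨a, 0, by omega⟩
    · exact ⟨a - r, 1, by omega⟩
  have r1 := distG_reach_int t u 2 (Or.inl rfl) (by norm_num) A
  have r2 := distG_reach_int t (u + 2 * A) t (Or.inr rfl) (by omega) B
  rw [hAB]; exact r1.trans r2

lemma distG_walk_decomp {t : ℤ} : ∀ {u v : ℤ} (w : (distG t).Walk u v),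
    ∃ P U : ℤ, v - u = 2 * P + t * U ∧ |P| + |U| ≤ (w.length : ℤ) := by
  intro u v w
  induction w with
  | nil => exact ⟨0, 0, by ring, by simp⟩
  | @cons u b v h w ih =>
      obtain ⟨P, U, hPU, hle⟩ := ih
      have hlen : ((SimpleGraph.Walk.cons h w).length : ℤ) = (w.length : ℤ) + 1 := by
        simp [SimpleGraph.Walk.length_cons]
      rw [hlen]
      have hP1 : |P + 1| ≤ |P| + 1 := by simpa using abs_add_le P 1
      have hP2 : |P - 1| ≤ |P| + 1 := by simpa [sub_eq_add_neg] using abs_add_le P (-1)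
      have hU1 : |U + 1| ≤ |U| + 1 := by simpa using abs_add_le U 1
      have hU2 : |U - 1| ≤ |U| + 1 := by simpa [sub_eq_add_neg] using abs_add_le U (-1)
      rcases distG_adj_step h with hb | hb | hb | hb
      · exact ⟨P + 1, U, by linarith, by linarith⟩
      · exact ⟨P - 1, U, by linarith, by linarith⟩
      · exact ⟨P, U + 1, by linarith, by linarith⟩
      · exact ⟨P, U - 1, by linarith, by linarith⟩

theorem stmt15 (t : ℤ) (ht : Odd t) (h3 : 3 ≤ t) (d : ℕ) (hd : (t + 1) / 2 ≤ (d : ℤ))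
    (m : ℕ) (hm : (m : ℤ) = t * d + (-t ^ 2 + 2 * t + 7) / 4) :
    ∃ f : ℤ → Fin m, ∀ u v : ℤ, u ≠ v → f u = f v → d < (distG t).dist u v := by
  obtain ⟨r, htr⟩ := ht
  have htr' : t = 2 * r + 1 := by omega
  have hr1 : 1 ≤ r := by omega
  have hd' : r + 1 ≤ (d : ℤ) := by omega
  have h4 : (-t ^ 2 + 2 * t + 7) = 4 * (2 - r ^ 2) := by rw [htr']; ring
  have hm' : (m : ℤ) = t * d + 2 - r ^ 2 := by
    rw [hm, h4, Int.mul_ediv_cancel_left _ (by norm_num)]; ring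
  set δ : ℤ := if r % 4 = 1 ∨ r % 4 = 2 then 0 else 1 with hδdef
  have hδ01 : 0 ≤ δ ∧ δ ≤ 1 := by rw [hδdef]; split <;> norm_num
  have hδ0 : (r % 4 = 1 ∨ r % 4 = 2) → δ = 0 := by intro h; rw [hδdef, if_pos h]
  have hδ1 : ¬(r % 4 = 1 ∨ r % 4 = 2) → δ = 1 := by intro h; rw [hδdef, if_neg h]
  set p : ℤ := t * d + 2 - r ^ 2 - δ with hpdef
  have htd : t * (r + 1) ≤ t * d := mul_le_mul_of_nonneg_left hd' (by omega)
  have hexp : t * (r + 1) = 2 * r ^ 2 + 3 * r + 1 := by rw [htr']; ring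
  have hsq : 0 ≤ r ^ 2 := sq_nonneg r
  have hp0 : 0 < p := by linarith [hδ01.1, hδ01.2]
  have hpm : p ≤ (m : ℤ) := by linarith [hδ01.1]
  have h2p : t * d < 2 * p := by linarith [hδ01.2]
  refine ⟨fun x => ⟨(x % p).toNat, ?_⟩, ?_⟩
  · have h1 : 0 ≤ x % p := Int.emod_nonneg x (by omega)
    have h2 : x % p < p := Int.emod_lt_of_pos x hp0
    omega
  intro u v huv hf
  simp only [Fin.mk.injEq] at hf
  have hmod : u % p = v % p := by
    have h1 : 0 ≤ u % p := Int.emod_nonneg u (by omega)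
    have h2 : 0 ≤ v % p := Int.emod_nonneg v (by omega)
    omega
  have hdvd : p ∣ v - u := Int.ModEq.dvd (hmod : u ≡ v [ZMOD p])
  by_contra hcon
  push_neg at hcon
  obtain ⟨w, hw⟩ := (distG_reach ⟨r, htr⟩ h3 u v).exists_walk_length_eq_dist
  obtain ⟨P, U, hPU, hle⟩ := distG_walk_decomp w
  have hled : |P| + |U| ≤ (d : ℤ) := by
    rw [hw] at hle
    exact le_trans hle (by exact_mod_cast hcon)
  have habs : |v - u| ≤ t * d := by
    rw [hPU]
    have e1 : |2 * P + t * U| ≤ |2 * P| + |t * U| := abs_add_le _ _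
    have e2 : |2 * P| = 2 * |P| := by
      rw [abs_mul]; norm_num
    have e3 : |t * U| = t * |U| := by
      rw [abs_mul, abs_of_pos (by omega : (0:ℤ) < t)]
    have e4 : 0 ≤ (t - 2) * |P| := mul_nonneg (by omega) (abs_nonneg P)
    have e5 : t * (|P| + |U|) ≤ t * d := mul_le_mul_of_nonneg_left hled (by omega)
    linarith [e1, e2, e3, e4, e5]
  have hvune : v - u ≠ 0 := by omega
  obtain ⟨k, hk⟩ := (dvd_abs p (v - u)).mpr hdvd
  have habs0 : 0 < |v - u| := abs_pos.mpr hvune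
  have hk1 : 1 ≤ k := by
    by_contra hcc
    push_neg at hcc
    have : p * k ≤ p * 0 := mul_le_mul_of_nonneg_left (by omega) (le_of_lt hp0)
    simp at this
    linarith
  have hk2 : k < 2 := by
    by_contra hcc
    push_neg at hcc
    have : p * 2 ≤ p * k := mul_le_mul_of_nonneg_left (by omega) (le_of_lt hp0)
    linarith
  have hkeq : k = 1 := by omega
  rw [hkeq, mul_one] at hk
  obtain ⟨P, U, hPU, hled⟩ : ∃ P U : ℤ, 2 * P + t * U = p ∧ |P| + |U| ≤ (d : ℤ) := by
    rcases abs_cases (v - u) with ⟨h1, -⟩ | ⟨h1, -⟩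
    · exact ⟨P, U, by linarith, hled⟩
    · refine ⟨-P, -U, by linarith [hPU], ?_⟩
      rw [abs_neg, abs_neg]; exact hled
  set c : ℤ := (d : ℤ) - U with hcdef
  have hUc : |U| = |(d : ℤ) - c| := by
    have h1 : (d : ℤ) - c = U := by rw [hcdef]; ring
    rw [h1]
  have habsdc : |(d : ℤ) - c| ≤ d := by rw [← hUc]; linarith [abs_nonneg P]
  have hself := le_abs_self ((d : ℤ) - c)
  have hc0 : 0 ≤ c := by linarith
  have hPc : |P| ≤ c := by rw [hUc] at hled; linarith
  have htc : t * c = 2 * (r * c) + c := by rw [htr']; ring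
  have htU : t * U = t * d - t * c := by rw [hcdef]; ring
  have h2P : 2 * P = t * c - (r ^ 2 - 2 + δ) := by linarith [hPU, htU]
  have hPle := abs_le.mp hPc
  have hB1 : (2 * r - 1) * c ≤ r ^ 2 - 2 + δ := by linarith [hPle.1, hPle.2, htc, h2P]
  have hB2 : r ^ 2 - 2 + δ ≤ (2 * r + 3) * c := by linarith [hPle.1, hPle.2, htc, h2P]
  have hc2 : 2 * c ≤ r := by
    by_contra hcc
    push_neg at hcc
    have hprod : 0 ≤ (2 * r - 1) * (2 * c - r - 1) :=
      mul_nonneg (by linarith) (by linarith)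
    linarith [hB1, hprod, hδ01.2, hr1]
  have hc1 : r - 1 ≤ 2 * c := by
    by_contra hcc
    push_neg at hcc
    have hprod : 0 ≤ (2 * r + 3) * (r - 2 - 2 * c) :=
      mul_nonneg (by linarith) (by linarith)
    linarith [hB2, hprod, hδ01.1, hr1]
  obtain ⟨e, he⟩ := Int.even_mul_succ_self (r - 1)
  have hrr : r ^ 2 - r = 2 * e := by linear_combination he
  obtain ⟨j, hj⟩ : ∃ j : ℤ, c - r - δ = 2 * j := by
    refine ⟨P - r * c - 1 + e, ?_⟩
    linear_combination -h2P - c * htr' + hrr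
  by_cases hco : r % 4 = 1 ∨ r % 4 = 2
  · have hδv := hδ0 hco
    omega
  · have hδv := hδ1 hco
    push_neg at hco
    omega
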